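/- Let a > 0, F(t) = a(|t|^{13/4} − (5/2)|t|^{11/4} + (45/16)|t|^{9/4}) and f(t) = a((13/4)|t|^{5/4} − (55/8)|t|^{3/4} + (405/64)|t|^{1/4})·t. Then: (i) f does not satisfy (AR): for every μ > 2 there exists t ≠ 0 with t f(t) < μ F(t) (indeed at |t| = 9/16 one has t f(t) = 2 F(t) > 0); and (ii) f does not satisfy (WN): the map t ↦ f(t)/|t| is not non-decreasing on (0, ∞). -/

import Mathlib

open Real

lemma pow4_rpow (b : ℝ) (hb : 0 ≤ b) (k : ℕ) :
    (b ^ 4 : ℝ) ^ ((k : ℝ)/4) = b ^ k := by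
  have h4 : (b ^ 4 : ℝ) = b ^ ((4:ℕ):ℝ) := (Real.rpow_natCast b 4).symm
  rw [h4, ← Real.rpow_natCast b k, ← Real.rpow_mul hb]
  congr 1
  ring

/-- **Example 1.2 fails (AR) and (WN).** For `a > 0`,
`F(t) = a(|t|^{13/4} − (5/2)|t|^{11/4} + (45/16)|t|^{9/4})` and
`f(t) = a((13/4)|t|^{5/4} − (55/8)|t|^{3/4} + (405/64)|t|^{1/4})·t`:
(i) for every `μ > 2` there exists `t ≠ 0` with `t f(t) < μ F(t)`
(indeed at `t = 9/16` one has `t f(t) = 2 F(t) > 0`); and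
(ii) `t ↦ f(t)/|t|` is not non-decreasing on `(0,∞)`. -/
theorem example_1_2_fails_AR_and_WN (a : ℝ) (ha : 0 < a)
    (F f : ℝ → ℝ)
    (hF : ∀ t : ℝ, F t = a * (|t| ^ ((13:ℝ)/4) - (5/2) * |t| ^ ((11:ℝ)/4)
      + (45/16) * |t| ^ ((9:ℝ)/4)))
    (hf : ∀ t : ℝ, f t = a * ((13/4) * |t| ^ ((5:ℝ)/4) - (55/8) * |t| ^ ((3:ℝ)/4)
      + (405/64) * |t| ^ ((1:ℝ)/4)) * t) :
    ((9/16 : ℝ) * f (9/16) = 2 * F (9/16) ∧ 0 < F (9/16) ∧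
      ∀ μ : ℝ, 2 < μ → ∃ t : ℝ, t ≠ 0 ∧ t * f t < μ * F t) ∧
    ¬ (∀ s t : ℝ, 0 < s → s ≤ t → f s / |s| ≤ f t / |t|) := by
  set b : ℝ := Real.sqrt 3 / 2 with hbdef
  have hb0 : 0 < b := by
    have : 0 < Real.sqrt 3 := Real.sqrt_pos.mpr (by norm_num)
    positivity
  have hb2 : b ^ 2 = 3/4 := by
    rw [hbdef, div_pow, Real.sq_sqrt (by norm_num : (3:ℝ) ≥ 0)]
    norm_num
  have h916 : |(9/16 : ℝ)| = b ^ 4 := by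
    rw [abs_of_pos (by norm_num)]
    nlinarith [hb2]
  have key : ∀ k : ℕ, |(9/16 : ℝ)| ^ ((k : ℝ)/4) = b ^ k := by
    intro k
    rw [h916]
    exact pow4_rpow b hb0.le k
  have e13 : |(9/16 : ℝ)| ^ ((13:ℝ)/4) = b ^ 13 := by
    have := key 13; norm_num at this ⊢; exact this
  have e11 : |(9/16 : ℝ)| ^ ((11:ℝ)/4) = b ^ 11 := by
    have := key 11; norm_num at this ⊢; exact this
  have e9 : |(9/16 : ℝ)| ^ ((9:ℝ)/4) = b ^ 9 := by
    have := key 9; norm_num at this ⊢; exact this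
  have e5 : |(9/16 : ℝ)| ^ ((5:ℝ)/4) = b ^ 5 := by
    have := key 5; norm_num at this ⊢; exact this
  have e3 : |(9/16 : ℝ)| ^ ((3:ℝ)/4) = b ^ 3 := by
    have := key 3; norm_num at this ⊢; exact this
  have e1 : |(9/16 : ℝ)| ^ ((1:ℝ)/4) = b ^ 1 := by
    have := key 1; norm_num at this ⊢; exact this
  have hFval : F (9/16) = (243/512) * a * b := by
    rw [hF, e13, e11, e9]
    linear_combination (a * (b ^ 11 - (7/4) * b ^ 9 + (3/2) * b ^ 7 + (9/8) * b ^ 5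
      + (27/32) * b ^ 3 + (81/128) * b)) * hb2
  have hAR : (9/16 : ℝ) * f (9/16) = 2 * F (9/16) := by
    rw [hf, hF, e13, e11, e9, e5, e3, e1]
    linear_combination (a * ((-2) * b ^ 11 + (7/2) * b ^ 9 - 3 * b ^ 7 - (9/4) * b ^ 5
      - (675/1024) * b ^ 3 - (10935/4096) * b)) * hb2
  have hFpos : 0 < F (9/16) := by
    rw [hFval]; positivity
  refine ⟨⟨hAR, hFpos, ?_⟩, ?_⟩
  · intro μ hμ
    exact ⟨9/16, by norm_num, by rw [hAR]; exact (mul_lt_mul_of_pos_right hμ hFpos)⟩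
  · intro h
    -- use s = (3/4)^4 = 81/256, t = (4/5)^4 = 256/625
    have hs4 : |(81/256 : ℝ)| = (3/4 : ℝ) ^ 4 := by rw [abs_of_pos] <;> norm_num
    have ht4 : |(256/625 : ℝ)| = (4/5 : ℝ) ^ 4 := by rw [abs_of_pos] <;> norm_num
    have ks := fun k => hs4 ▸ pow4_rpow (3/4) (by norm_num) k
    have kt := fun k => ht4 ▸ pow4_rpow (4/5) (by norm_num) k
    have hle := h (81/256) (256/625) (by norm_num) (by norm_num)
    rw [hf, hf] at hle
    have s5 : |(81/256 : ℝ)| ^ ((5:ℝ)/4) = (3/4:ℝ) ^ 5 := by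
      have := ks 5; norm_num at this ⊢
    have s3 : |(81/256 : ℝ)| ^ ((3:ℝ)/4) = (3/4:ℝ) ^ 3 := by
      have := ks 3; norm_num at this ⊢
    have s1 : |(81/256 : ℝ)| ^ ((1:ℝ)/4) = (3/4:ℝ) ^ 1 := by
      have := ks 1; norm_num at this ⊢
    have t5 : |(256/625 : ℝ)| ^ ((5:ℝ)/4) = (4/5:ℝ) ^ 5 := by
      have := kt 5; norm_num at this ⊢
    have t3 : |(256/625 : ℝ)| ^ ((3:ℝ)/4) = (4/5:ℝ) ^ 3 := by
      have := kt 3; norm_num at this ⊢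
    have t1 : |(256/625 : ℝ)| ^ ((1:ℝ)/4) = (4/5:ℝ) ^ 1 := by
      have := kt 1; norm_num at this ⊢
    rw [s5, s3, s1, t5, t3, t1, abs_of_pos (by norm_num : (0:ℝ) < 81/256),
      abs_of_pos (by norm_num : (0:ℝ) < 256/625),
      div_le_div_iff₀ (by norm_num) (by norm_num)] at hle
    nlinarith [hle, ha]
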